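/- Catalan upper bound for S-fractions: If Σ_{n≥0} a_n t^n is represented by the S-fraction with coefficients α_0 = 1 and 0 ≤ α_i ≤ 1 for all i ≥ 1, then 0 ≤ a_n ≤ C_n ≤ 4^n for all n ≥ 0, where C_n = (1/(n+1))·C(2n,n) is the n-th Catalan number. -/

import Mathlib

open PowerSeries

/-- A formal power series `f ∈ ℝ⟦t⟧` is represented by the S-fraction with
coefficients `α`. -/
def IsSFractionOf (α : ℕ → ℝ) (f : PowerSeries ℝ) : Prop :=
  ∃ F : ℕ → PowerSeries ℝ,
    (∀ k, F k * (1 - PowerSeries.C (α (k + 1)) * PowerSeries.X * F (k + 1)) = 1) ∧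
    f = PowerSeries.C (α 0) * F 0

lemma sfraction_coeff_bound (α : ℕ → ℝ) (hα : ∀ i, 1 ≤ i → 0 ≤ α i ∧ α i ≤ 1)
    (F : ℕ → PowerSeries ℝ)
    (hF : ∀ k, F k * (1 - PowerSeries.C (α (k + 1)) * PowerSeries.X * F (k + 1)) = 1) :
    ∀ n k, 0 ≤ coeff n (F k) ∧ coeff n (F k) ≤ (catalan n : ℝ) := by
  intro n
  induction n using Nat.strong_induction_on with
  | _ n ih =>
    intro k
    have key : F k = 1 + PowerSeries.C (α (k + 1)) * PowerSeries.X * (F (k + 1) * F k) := by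
      have h := hF k
      ring_nf at h ⊢
      linear_combination h
    match n with
    | 0 =>
      have h0 : coeff 0 (F k) = 1 := by
        rw [key]
        simp [mul_assoc, PowerSeries.coeff_zero_eq_constantCoeff]
      rw [h0]; norm_num
    | (m + 1) =>
      have hc : coeff (m + 1) (F k)
          = α (k + 1) * ∑ p ∈ Finset.HasAntidiagonal.antidiagonal m,
              coeff p.1 (F (k + 1)) * coeff p.2 (F k) := by
        conv_lhs => rw [key]
        rw [map_add, mul_assoc, PowerSeries.coeff_C_mul, PowerSeries.coeff_succ_X_mul,
          PowerSeries.coeff_mul]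
        simp
      have hαk := hα (k + 1) (by omega)
      have hsum_nonneg : 0 ≤ ∑ p ∈ Finset.HasAntidiagonal.antidiagonal m,
          coeff p.1 (F (k + 1)) * coeff p.2 (F k) := by
        apply Finset.sum_nonneg
        intro p hp
        rw [Finset.HasAntidiagonal.mem_antidiagonal] at hp
        exact mul_nonneg (ih p.1 (by omega) (k + 1)).1 (ih p.2 (by omega) k).1
      have hsum_le : (∑ p ∈ Finset.HasAntidiagonal.antidiagonal m,
          coeff p.1 (F (k + 1)) * coeff p.2 (F k)) ≤ (catalan (m + 1) : ℝ) := by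
        rw [catalan_succ']
        push_cast
        apply Finset.sum_le_sum
        intro p hp
        rw [Finset.HasAntidiagonal.mem_antidiagonal] at hp
        have h1 := ih p.1 (by omega) (k + 1)
        have h2 := ih p.2 (by omega) k
        exact mul_le_mul h1.2 h2.2 h2.1 (by positivity)
      constructor
      · rw [hc]; exact mul_nonneg hαk.1 hsum_nonneg
      · rw [hc]
        calc α (k + 1) * _ ≤ 1 * ((catalan (m+1) : ℝ)) :=
              mul_le_mul hαk.2 hsum_le hsum_nonneg zero_le_one
          _ = (catalan (m+1) : ℝ) := one_mul _

lemma catalan_eq_real (n : ℕ) :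
    (catalan n : ℝ) = (1 / (n + 1 : ℝ)) * ((2 * n).choose n : ℝ) := by
  have h := succ_mul_catalan_eq_centralBinom n
  have h' : ((n + 1 : ℕ) : ℝ) * (catalan n : ℝ) = ((2 * n).choose n : ℝ) := by
    rw [← Nat.cast_mul, h]; rfl
  push_cast at h'
  field_simp
  linarith

/-- Catalan upper bound for S-fractions: if `∑ a_n t^n` is represented by an
S-fraction with `α_0 = 1` and `0 ≤ α_i ≤ 1` for `i ≥ 1`, then
`0 ≤ a_n ≤ C_n ≤ 4^n`, where `C_n = (1/(n+1))·C(2n,n)` is the Catalan number. -/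
theorem sfraction_catalan_bound (α : ℕ → ℝ) (a : ℕ → ℝ)
    (hα0 : α 0 = 1) (hα : ∀ i, 1 ≤ i → 0 ≤ α i ∧ α i ≤ 1)
    (hf : IsSFractionOf α (PowerSeries.mk a)) :
    ∀ n : ℕ, 0 ≤ a n ∧
      a n ≤ (1 / (n + 1 : ℝ)) * ((2 * n).choose n : ℝ) ∧
      (1 / (n + 1 : ℝ)) * ((2 * n).choose n : ℝ) ≤ 4 ^ n := by
  intro n
  obtain ⟨F, hF, hfF⟩ := hf
  have ha : a n = coeff n (F 0) := by
    have := congrArg (coeff n) hfF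
    simpa [hα0] using this
  have hb := sfraction_coeff_bound α hα F hF n 0
  rw [← catalan_eq_real]
  have hcat4 : (catalan n : ℝ) ≤ 4 ^ n := by
    have h1 : catalan n ≤ n.centralBinom := by
      rw [catalan_eq_centralBinom_div]
      exact Nat.div_le_self _ _
    have h2 : n.centralBinom ≤ 4 ^ n := by
      have : (2 * n).choose n ≤ ∑ i ∈ Finset.range (2 * n + 1), (2 * n).choose i :=
        Finset.single_le_sum (f := fun i => (2 * n).choose i)
          (fun i _ => Nat.zero_le _) (by simp; omega)
      rw [Nat.sum_range_choose] at this
      calc n.centralBinom = (2 * n).choose n := rfl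
        _ ≤ 2 ^ (2 * n) := this
        _ = 4 ^ n := by rw [pow_mul]; norm_num
    calc (catalan n : ℝ) ≤ (n.centralBinom : ℝ) := by exact_mod_cast h1
      _ ≤ ((4 ^ n : ℕ) : ℝ) := by exact_mod_cast h2
      _ = 4 ^ n := by push_cast; ring
  exact ⟨ha ▸ hb.1, ha ▸ hb.2, hcat4⟩
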